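/- Let R be a ℚ-algebra and f, g, h ∈ R((u))((t))* with (ν₁,ν₂)(f) = (0,0), f₀ = 1, and similarly for g, so that log f and log g are defined. Then Res(log f · (dg/g) ∧ (dh/h)) = − Res(log g · (df/f) ∧ (dh/h)); i.e. the exponential-residue expression is antisymmetric in its first two arguments. -/

import Mathlib

noncomputable section

namespace CC

variable {R : Type*} [CommRing R]

/-- Formal derivative of a Laurent series. -/
def DerivT (f : LaurentSeries R) : LaurentSeries R where
  coeff n := (n + 1) • f.coeff (n + 1)
  isPWO_support' := by
    have hsub : Function.support (fun n : ℤ => (n + 1) • f.coeff (n + 1)) ⊆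
        (fun n : ℤ => n - 1) '' Function.support f.coeff := by
      intro n hn
      have h1 : (n + 1) • f.coeff (n + 1) ≠ 0 := hn
      have h2 : f.coeff (n + 1) ≠ 0 := fun h => h1 (by rw [h, smul_zero])
      exact ⟨n + 1, h2, by ring⟩
    have hmono : Monotone fun n : ℤ => n - 1 := fun a b h => by dsimp only; omega
    exact (Set.IsPWO.image_of_monotoneOn f.isPWO_support' (hmono.monotoneOn _)).mono hsub

@[simp] lemma DerivT_coeff (f : LaurentSeries R) (n : ℤ) :
    (DerivT f).coeff n = (n + 1) • f.coeff (n + 1) := rfl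

lemma DerivT_zero : DerivT (0 : LaurentSeries R) = 0 := by
  ext n
  simp

/-- Partial derivative in the inner variable `u` of an iterated Laurent series. -/
def DerivU (f : LaurentSeries (LaurentSeries R)) : LaurentSeries (LaurentSeries R) where
  coeff s := DerivT (f.coeff s)
  isPWO_support' := by
    refine f.isPWO_support'.mono ?_
    intro s hs
    have h1 : DerivT (f.coeff s) ≠ 0 := hs
    exact fun h => h1 (by rw [h, DerivT_zero])

/-- Two-dimensional residue: the coefficient of `u⁻¹t⁻¹ du∧dt`. -/
def Res2 (x : LaurentSeries (LaurentSeries R)) : R := (x.coeff (-1)).coeff (-1)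

/-- `y ∈ 𝔭(R)`: supported in bidegrees `< (0,0)` lexicographically, nilpotent coefficients. -/
def InPP (y : LaurentSeries (LaurentSeries R)) : Prop :=
  (∀ s : ℤ, 0 < s → y.coeff s = 0) ∧
  (∀ w : ℤ, 0 ≤ w → (y.coeff 0).coeff w = 0) ∧
  (∀ s w : ℤ, IsNilpotent ((y.coeff s).coeff w))

/-- `y ∈ 𝔪(R)`: supported in bidegrees `> (0,0)` lexicographically. -/
def InMM (y : LaurentSeries (LaurentSeries R)) : Prop :=
  (∀ s : ℤ, s < 0 → y.coeff s = 0) ∧ (∀ w : ℤ, w ≤ 0 → (y.coeff 0).coeff w = 0)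

/-- `L` is the logarithm of the unit `f`: `dL = df/f` (for both partial derivatives) and the
`(0,0)` bi-coefficient of `L` vanishes. -/
def IsLogOf (f : (LaurentSeries (LaurentSeries R))ˣ)
    (L : LaurentSeries (LaurentSeries R)) : Prop :=
  DerivT L = DerivT (f : LaurentSeries (LaurentSeries R)) *
      ((f⁻¹ : (LaurentSeries (LaurentSeries R))ˣ) : LaurentSeries (LaurentSeries R)) ∧
  DerivU L = DerivU (f : LaurentSeries (LaurentSeries R)) *
      ((f⁻¹ : (LaurentSeries (LaurentSeries R))ˣ) : LaurentSeries (LaurentSeries R)) ∧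
  (L.coeff 0).coeff 0 = 0

/-- The `du∧dt`-coefficient of `dx/x ∧ dy/y` for units `x`, `y`. -/
def WedgeLog (x y : (LaurentSeries (LaurentSeries R))ˣ) :
    LaurentSeries (LaurentSeries R) :=
  (DerivU (x : LaurentSeries (LaurentSeries R)) * ((x⁻¹ : _ˣ) : LaurentSeries (LaurentSeries R))) *
      (DerivT (y : LaurentSeries (LaurentSeries R)) * ((y⁻¹ : _ˣ) : LaurentSeries (LaurentSeries R))) -
    (DerivU (y : LaurentSeries (LaurentSeries R)) * ((y⁻¹ : _ˣ) : LaurentSeries (LaurentSeries R))) *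
      (DerivT (x : LaurentSeries (LaurentSeries R)) * ((x⁻¹ : _ˣ) : LaurentSeries (LaurentSeries R)))

/-- Euler operator: coeff n ↦ n • coeff n. -/
def EulerT (f : LaurentSeries R) : LaurentSeries R where
  coeff n := n • f.coeff n
  isPWO_support' := f.isPWO_support'.mono (fun n hn => by
    simp only [Function.mem_support] at hn ⊢
    exact fun h => hn (by rw [h, smul_zero]))

@[simp] lemma EulerT_coeff (f : LaurentSeries R) (n : ℤ) :
    (EulerT f).coeff n = n • f.coeff n := rfl

lemma EulerT_support (f : LaurentSeries R) : (EulerT f).support ⊆ f.support := by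
  intro n hn
  simp only [HahnSeries.mem_support, EulerT_coeff] at hn ⊢
  exact fun h => hn (by rw [h, smul_zero])

lemma EulerT_mul (a b : LaurentSeries R) : EulerT (a * b) = EulerT a * b + a * EulerT b := by
  ext n
  rw [HahnSeries.coeff_add, EulerT_coeff, HahnSeries.coeff_mul,
      HahnSeries.coeff_mul_left' a.isPWO_support (EulerT_support a),
      HahnSeries.coeff_mul_right' b.isPWO_support (EulerT_support b),
      Finset.smul_sum, ← Finset.sum_add_distrib]
  refine Finset.sum_congr rfl fun ij hij => ?_
  rw [Finset.mem_addAntidiagonal] at hij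
  rw [EulerT_coeff, EulerT_coeff, ← hij.2.2, add_smul, smul_mul_assoc, mul_smul_comm]

lemma DerivT_eq_single_mul (f : LaurentSeries R) :
    DerivT f = HahnSeries.single (-1 : ℤ) (1 : R) * EulerT f := by
  ext n
  have hn : n = (n + 1) + -1 := by ring
  rw [DerivT_coeff, hn, HahnSeries.coeff_single_mul_add, one_mul, EulerT_coeff]
  ring_nf

lemma DerivT_mul (a b : LaurentSeries R) :
    DerivT (a * b) = DerivT a * b + a * DerivT b := by
  rw [DerivT_eq_single_mul, DerivT_eq_single_mul, DerivT_eq_single_mul, EulerT_mul]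
  ring

lemma DerivT_add (a b : LaurentSeries R) : DerivT (a + b) = DerivT a + DerivT b := by
  ext n; simp [smul_add]

def DerivTHom : LaurentSeries R →+ LaurentSeries R where
  toFun := DerivT
  map_zero' := DerivT_zero
  map_add' := DerivT_add

lemma intCast_mul_coeff (m : ℤ) (a : LaurentSeries R) (n : ℤ) :
    ((m : LaurentSeries R) * a).coeff n = (m : R) * a.coeff n := by
  have h1 : (m : LaurentSeries R) = HahnSeries.single (0 : ℤ) (m : R) := by
    rw [← map_intCast (HahnSeries.C : R →+* LaurentSeries R) m, HahnSeries.C_apply]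
  rw [h1, HahnSeries.coeff_single_zero_mul]

lemma zsmul_coeff (m : ℤ) (a : LaurentSeries R) (n : ℤ) : (m • a).coeff n = m • a.coeff n := by
  simp only [zsmul_eq_mul, intCast_mul_coeff]

lemma DerivT_sum {ι : Type*} (s : Finset ι) (f : ι → LaurentSeries R) :
    DerivT (∑ i ∈ s, f i) = ∑ i ∈ s, DerivT (f i) := map_sum DerivTHom f s

lemma DerivT_one : DerivT (1 : LaurentSeries R) = 0 := by
  ext n
  rw [DerivT_coeff, HahnSeries.coeff_one, HahnSeries.coeff_zero]
  by_cases h : n + 1 = 0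
  · rw [if_pos h, h]; simp
  · rw [if_neg h, smul_zero]

@[simp] lemma DerivU_coeff (f : LaurentSeries (LaurentSeries R)) (s : ℤ) :
    (DerivU f).coeff s = DerivT (f.coeff s) := rfl

lemma DerivU_support (f : LaurentSeries (LaurentSeries R)) : (DerivU f).support ⊆ f.support := by
  intro s hs
  simp only [HahnSeries.mem_support, DerivU_coeff] at hs ⊢
  exact fun h => hs (by rw [h, DerivT_zero])

lemma DerivU_mul (a b : LaurentSeries (LaurentSeries R)) :
    DerivU (a * b) = DerivU a * b + a * DerivU b := by
  refine HahnSeries.ext (funext fun s => ?_)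
  have hL : (DerivU (a * b)).coeff s =
      ∑ ij ∈ Finset.addAntidiagonal a.isPWO_support b.isPWO_support s,
        DerivT (a.coeff ij.1 * b.coeff ij.2) := by
    rw [DerivU_coeff, HahnSeries.coeff_mul]
    exact map_sum DerivTHom _ _
  rw [hL, HahnSeries.coeff_add,
      HahnSeries.coeff_mul_left' a.isPWO_support (DerivU_support a),
      HahnSeries.coeff_mul_right' b.isPWO_support (DerivU_support b),
      ← Finset.sum_add_distrib]
  refine Finset.sum_congr rfl fun ij hij => ?_
  rw [DerivT_mul, DerivU_coeff, DerivU_coeff]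

lemma DerivU_one : DerivU (1 : LaurentSeries (LaurentSeries R)) = 0 := by
  ext s
  rw [DerivU_coeff, HahnSeries.coeff_one, HahnSeries.coeff_zero]
  by_cases h : s = 0
  · rw [if_pos h, DerivT_one]
  · rw [if_neg h, DerivT_zero]

lemma DerivT_one' : DerivT (1 : LaurentSeries (LaurentSeries R)) = 0 := DerivT_one

lemma DerivU_DerivT_comm (x : LaurentSeries (LaurentSeries R)) :
    DerivU (DerivT x) = DerivT (DerivU x) := by
  ext s n
  calc ((DerivU (DerivT x)).coeff s).coeff n
      = (n + 1) • ((s + 1) • x.coeff (s + 1)).coeff (n + 1) := rfl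
    _ = (n + 1) • ((s + 1) • (x.coeff (s + 1)).coeff (n + 1)) := by rw [zsmul_coeff]
    _ = (s + 1) • ((n + 1) • (x.coeff (s + 1)).coeff (n + 1)) := smul_comm _ _ _
    _ = (s + 1) • (DerivT (x.coeff (s + 1))).coeff n := rfl
    _ = ((s + 1) • DerivT (x.coeff (s + 1))).coeff n := by rw [zsmul_coeff]
    _ = ((DerivT (DerivU x)).coeff s).coeff n := rfl

lemma Res2_DerivU (x : LaurentSeries (LaurentSeries R)) : Res2 (DerivU x) = 0 := by
  show (DerivT (x.coeff (-1))).coeff (-1) = 0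
  rw [DerivT_coeff]; norm_num

lemma Res2_DerivT (x : LaurentSeries (LaurentSeries R)) : Res2 (DerivT x) = 0 := by
  show ((DerivT x).coeff (-1)).coeff (-1) = 0
  rw [DerivT_coeff]; norm_num

lemma Res2_add (x y : LaurentSeries (LaurentSeries R)) : Res2 (x + y) = Res2 x + Res2 y := by
  simp [Res2]

lemma Res2_sub (x y : LaurentSeries (LaurentSeries R)) : Res2 (x - y) = Res2 x - Res2 y := by
  simp [Res2]

lemma aux_inv {A : Type*} [CommRing A] (a b x y : A) (h0 : x * b + a * y = 0)
    (hba : b * a = 1) : y = -(b * (x * b)) := by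
  have : y = b * a * y := by rw [hba, one_mul]
  calc y = b * a * y := this
    _ = b * (a * y) := mul_assoc _ _ _
    _ = b * (-(x * b)) := by rw [eq_neg_of_add_eq_zero_right h0]
    _ = -(b * (x * b)) := mul_neg _ _

-- inverse derivative formulas
lemma DerivU_inv (h : (LaurentSeries (LaurentSeries R))ˣ) :
    DerivU ((h⁻¹ : _ˣ) : LaurentSeries (LaurentSeries R)) =
      -(((h⁻¹ : _ˣ) : LaurentSeries (LaurentSeries R)) *
        (DerivU (h : LaurentSeries (LaurentSeries R)) *
          ((h⁻¹ : _ˣ) : LaurentSeries (LaurentSeries R)))) := by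
  set a : LaurentSeries (LaurentSeries R) := (h : LaurentSeries (LaurentSeries R))
  set b : LaurentSeries (LaurentSeries R) := ((h⁻¹ : _ˣ) : LaurentSeries (LaurentSeries R))
  have hab : a * b = 1 := h.mul_inv
  have h0 : DerivU a * b + a * DerivU b = 0 := by
    rw [← DerivU_mul, hab, DerivU_one]
  exact aux_inv a b _ _ h0 h.inv_mul

lemma DerivT_inv (h : (LaurentSeries (LaurentSeries R))ˣ) :
    DerivT ((h⁻¹ : _ˣ) : LaurentSeries (LaurentSeries R)) =
      -(((h⁻¹ : _ˣ) : LaurentSeries (LaurentSeries R)) *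
        (DerivT (h : LaurentSeries (LaurentSeries R)) *
          ((h⁻¹ : _ˣ) : LaurentSeries (LaurentSeries R)))) := by
  set a : LaurentSeries (LaurentSeries R) := (h : LaurentSeries (LaurentSeries R))
  set b : LaurentSeries (LaurentSeries R) := ((h⁻¹ : _ˣ) : LaurentSeries (LaurentSeries R))
  have hab : a * b = 1 := h.mul_inv
  have h0 : DerivT a * b + a * DerivT b = 0 := by
    rw [← DerivT_mul, hab, DerivT_one]
  exact aux_inv a b _ _ h0 h.inv_mul

lemma aux_comm {A : Type*} [CommRing A] (D p q b : A) :
    D * b + p * -(b * (q * b)) = D * b + q * -(b * (p * b)) := by ring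

lemma dlog_comm (h : (LaurentSeries (LaurentSeries R))ˣ) :
    DerivU (DerivT (h : LaurentSeries (LaurentSeries R)) *
        ((h⁻¹ : _ˣ) : LaurentSeries (LaurentSeries R))) =
      DerivT (DerivU (h : LaurentSeries (LaurentSeries R)) *
        ((h⁻¹ : _ˣ) : LaurentSeries (LaurentSeries R))) := by
  set a : LaurentSeries (LaurentSeries R) := (h : LaurentSeries (LaurentSeries R)) with ha
  set b : LaurentSeries (LaurentSeries R) := ((h⁻¹ : _ˣ) : LaurentSeries (LaurentSeries R)) with hb
  calc DerivU (DerivT a * b)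
      = DerivU (DerivT a) * b + DerivT a * DerivU b := DerivU_mul _ _
    _ = DerivT (DerivU a) * b + DerivT a * -(b * (DerivU a * b)) := by
        rw [DerivU_DerivT_comm, DerivU_inv h]
    _ = DerivT (DerivU a) * b + DerivU a * -(b * (DerivT a * b)) :=
        aux_comm (DerivT (DerivU a)) (DerivT a) (DerivU a) b
    _ = DerivT (DerivU a) * b + DerivU a * DerivT b := by rw [DerivT_inv h]
    _ = DerivT (DerivU a * b) := (DerivT_mul _ _).symm

lemma aux_main {A : Type*} [CommRing A] (lf lg uf tf ug tg uh th X : A) :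
    lf * (ug * th - uh * tg) + lg * (uf * th - uh * tf) =
      ((uf * lg + lf * ug) * th + lf * lg * X) -
        ((tf * lg + lf * tg) * uh + lf * lg * X) := by ring


/-- **Antisymmetry of the exponential-residue expression in its first two arguments.**
Let `R` be a `ℚ`-algebra and `f, g, h ∈ R((u))((t))*` with `(ν₁,ν₂)(f) = (0,0)`, `f₀ = 1`
(i.e. `f = f₋₁·f₁` with `f₋₁ ∈ 1 + 𝔭(R)`, `f₁ ∈ 1 + 𝔪(R)`), and similarly for `g`, so that
`log f` and `log g` are defined.  Then
`Res(log f · (dg/g) ∧ (dh/h)) = −Res(log g · (df/f) ∧ (dh/h))`. -/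
theorem res_log_antisymm [Algebra ℚ R]
    (f g h : (LaurentSeries (LaurentSeries R))ˣ)
    (hfshape : ∃ fm fp : LaurentSeries (LaurentSeries R),
      InPP (fm - 1) ∧ InMM (fp - 1) ∧ (f : LaurentSeries (LaurentSeries R)) = fm * fp)
    (hgshape : ∃ gm gp : LaurentSeries (LaurentSeries R),
      InPP (gm - 1) ∧ InMM (gp - 1) ∧ (g : LaurentSeries (LaurentSeries R)) = gm * gp)
    (Lf Lg : LaurentSeries (LaurentSeries R))
    (hLf : IsLogOf f Lf) (hLg : IsLogOf g Lg) :
    Res2 (Lf * WedgeLog g h) = -Res2 (Lg * WedgeLog f h) := by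

  set Th : LaurentSeries (LaurentSeries R) :=
    DerivT (h : LaurentSeries (LaurentSeries R)) *
      ((h⁻¹ : _ˣ) : LaurentSeries (LaurentSeries R)) with hTh
  set Uh : LaurentSeries (LaurentSeries R) :=
    DerivU (h : LaurentSeries (LaurentSeries R)) *
      ((h⁻¹ : _ˣ) : LaurentSeries (LaurentSeries R)) with hUh
  have e1 : DerivU (Lf * Lg * Th) =
      (DerivU Lf * Lg + Lf * DerivU Lg) * Th + Lf * Lg * DerivU Th := by
    rw [DerivU_mul (Lf * Lg) Th, DerivU_mul Lf Lg]
  have e2 : DerivT (Lf * Lg * Uh) =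
      (DerivT Lf * Lg + Lf * DerivT Lg) * Uh + Lf * Lg * DerivT Uh := by
    rw [DerivT_mul (Lf * Lg) Uh, DerivT_mul Lf Lg]
  have key : Lf * WedgeLog g h + Lg * WedgeLog f h =
      DerivU (Lf * Lg * Th) - DerivT (Lf * Lg * Uh) := by
    rw [e1, e2, hLf.1, hLf.2.1, hLg.1, hLg.2.1, hTh, hUh, dlog_comm h]
    exact aux_main Lf Lg
      (DerivU (f : LaurentSeries (LaurentSeries R)) *
        ((f⁻¹ : _ˣ) : LaurentSeries (LaurentSeries R)))
      (DerivT (f : LaurentSeries (LaurentSeries R)) *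
        ((f⁻¹ : _ˣ) : LaurentSeries (LaurentSeries R)))
      (DerivU (g : LaurentSeries (LaurentSeries R)) *
        ((g⁻¹ : _ˣ) : LaurentSeries (LaurentSeries R)))
      (DerivT (g : LaurentSeries (LaurentSeries R)) *
        ((g⁻¹ : _ˣ) : LaurentSeries (LaurentSeries R)))
      (DerivU (h : LaurentSeries (LaurentSeries R)) *
        ((h⁻¹ : _ˣ) : LaurentSeries (LaurentSeries R)))
      (DerivT (h : LaurentSeries (LaurentSeries R)) *
        ((h⁻¹ : _ˣ) : LaurentSeries (LaurentSeries R)))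
      (DerivT (DerivU (h : LaurentSeries (LaurentSeries R)) *
        ((h⁻¹ : _ˣ) : LaurentSeries (LaurentSeries R))))
  have hres : Res2 (Lf * WedgeLog g h) + Res2 (Lg * WedgeLog f h) = 0 := by
    rw [← Res2_add, key, Res2_sub, Res2_DerivU, Res2_DerivT, sub_zero]
  exact eq_neg_of_add_eq_zero_left hres
end CC
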